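/- Let G = A ∗_C B be an amalgamated free product, formed from injective group homomorphisms i : C → A and j : C → B. If an element of the image of A in G is conjugate in G to an element of the image of B in G, then it is conjugate in G to an element of the image of C in G. -/

import Mathlib

open Monoid Monoid.PushoutI Monoid.CoprodI

namespace Stmt14Aux

variable {ι : Type*} {Gs : ι → Type*} [∀ i, Group (Gs i)] {H : Type*} [Group H]
  {φ : ∀ i, H →* Gs i}

lemma prod_revInv (L : List (Σ i, Gs i)) :
    ((L.reverse.map (fun p => (⟨p.1, p.2⁻¹⟩ : Σ i, Gs i))).map
      (fun p => of (φ := φ) p.1 p.2)).prod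
    = ((L.map fun p => of (φ := φ) p.1 p.2).prod)⁻¹ := by
  induction L with
  | nil => simp
  | cons p L ih =>
    rw [List.reverse_cons, List.map_append, List.map_append, List.prod_append, ih]
    simp [mul_inv_rev]

lemma ofCoprodI_word_prod (w : Word Gs) :
    ofCoprodI (φ := φ) w.prod = (w.toList.map fun p => of (φ := φ) p.1 p.2).prod := by
  rw [Word.prod, map_list_prod, List.map_map]
  rfl

theorem conj_into_base (hφ : ∀ i, Function.Injective (φ i)) {i j : ι} (hij : i ≠ j)
    (v : Word Gs) :
    Reduced φ v → ∀ (a : Gs i) (b : Gs j),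
      of (φ := φ) i a = ofCoprodI v.prod * of j b * (ofCoprodI v.prod)⁻¹ →
      ∃ (k' : PushoutI φ) (h : H), of (φ := φ) i a = k' * base φ h * k'⁻¹ := by
  induction v using Word.consRecOn with
  | empty =>
    intro _ a b heq
    rw [Word.prod_empty, map_one, one_mul, inv_one, mul_one] at heq
    have hmem : of (φ := φ) i a ∈ (of (φ := φ) i).range ⊓ (of (φ := φ) j).range :=
      ⟨⟨a, rfl⟩, ⟨b, heq.symm⟩⟩
    rw [inf_of_range_eq_base_range hφ hij] at hmem
    obtain ⟨h, hh⟩ := hmem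
    exact ⟨1, h, by simp [hh]⟩
  | cons l g v h1 hg1 ih =>
    intro hred a b heq
    have hgr : g ∉ (φ l).range := hred _ List.mem_cons_self
    have hredv : Reduced φ v := fun p hp => hred _ (List.mem_cons_of_mem _ hp)
    rw [Word.prod_cons, map_mul, ofCoprodI_of] at heq
    by_cases hl : l = i
    · subst hl
      have heq' : of (φ := φ) l (g⁻¹ * a * g) =
          ofCoprodI v.prod * of j b * (ofCoprodI v.prod)⁻¹ := by
        simp only [map_mul, map_inv]
        rw [heq]
        group
      obtain ⟨k', h, hk⟩ := ih hredv _ _ heq'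
      refine ⟨of (φ := φ) l g * k', h, ?_⟩
      have : of (φ := φ) l a = of (φ := φ) l g * of (φ := φ) l (g⁻¹ * a * g) *
          (of (φ := φ) l g)⁻¹ := by
        simp only [map_mul, map_inv]; group
      rw [this, hk]
      simp [mul_assoc]
    · by_cases hbr : b ∈ (φ j).range
      · obtain ⟨c, rfl⟩ := hbr
        exact ⟨of (φ := φ) l g * ofCoprodI v.prod, c, by
          rw [heq, of_apply_eq_base]⟩
      by_cases har : a ∈ (φ i).range
      · obtain ⟨c, rfl⟩ := har
        exact ⟨1, c, by simp [of_apply_eq_base]⟩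
      exfalso
      have ha1 : a ≠ 1 := fun h => har (h ▸ one_mem _)
      set v' : Word Gs := Word.cons g v h1 hg1 with hv'
      have hv'list : v'.toList = ⟨l, g⟩ :: v.toList := rfl
      have hredv' : Reduced φ v' := hred
      -- build the conjugated word
      let u : Word Gs :=
        { toList := (v'.toList.reverse.map (fun p => (⟨p.1, p.2⁻¹⟩ : Σ i, Gs i))) ++
            ⟨i, a⟩ :: v'.toList
          ne_one := by
            intro p hp
            rcases List.mem_append.1 hp with hp | hp
            · obtain ⟨q, hq, rfl⟩ := List.mem_map.1 hp
              exact inv_ne_one.2 (v'.ne_one _ (List.mem_reverse.1 hq))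
            · rcases List.mem_cons.1 hp with rfl | hp
              · exact ha1
              · exact v'.ne_one _ hp
          chain_ne := by
            rw [List.isChain_append]
            refine ⟨?_, ?_, ?_⟩
            · rw [List.isChain_map, List.isChain_reverse]
              refine v'.chain_ne.imp ?_
              intro p q h
              exact Ne.symm h
            · rw [List.isChain_cons]
              refine ⟨?_, v'.chain_ne⟩
              intro y hy
              rw [hv'list] at hy
              simp only [List.head?_cons, Option.mem_def, Option.some.injEq] at hy
              subst hy
              exact Ne.symm hl
            · intro x hx y hy
              rw [List.head?_cons, Option.mem_def, Option.some.injEq] at hy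
              subst hy
              rw [List.map_reverse, List.getLast?_reverse, hv'list,
                List.map_cons, List.head?_cons, Option.mem_def,
                Option.some.injEq] at hx
              subst hx
              exact hl }
      have hredu : Reduced φ u := by
        intro p hp
        rcases List.mem_append.1 hp with hp | hp
        · obtain ⟨q, hq, rfl⟩ := List.mem_map.1 hp
          simpa using hredv' _ (List.mem_reverse.1 hq)
        · rcases List.mem_cons.1 hp with rfl | hp
          · exact har
          · exact hredv' _ hp
      have huprod : ofCoprodI (φ := φ) u.prod = of (φ := φ) j b := by
        rw [ofCoprodI_word_prod]
        show ((((v'.toList.reverse.map (fun p => (⟨p.1, p.2⁻¹⟩ : Σ i, Gs i))) ++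
            ⟨i, a⟩ :: v'.toList).map fun p => of (φ := φ) p.1 p.2)).prod = _
        rw [List.map_append, List.prod_append, List.map_cons, List.prod_cons,
          prod_revInv]
        have hV : (v'.toList.map fun p => of (φ := φ) p.1 p.2).prod =
            ofCoprodI (φ := φ) v'.prod := (ofCoprodI_word_prod v').symm
        rw [hV]
        have hVprod : ofCoprodI (φ := φ) v'.prod =
            of (φ := φ) l g * ofCoprodI v.prod := by
          rw [hv', Word.prod_cons, map_mul, ofCoprodI_of]
        rw [hVprod, heq]
        group
      -- compare normal forms
      classical
      obtain ⟨d⟩ := NormalWord.transversal_nonempty φ hφ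
      obtain ⟨w₁, hw₁prod, hw₁map⟩ := hredu.exists_normalWord_prod_eq d
      have hempty_fstIdx : (NormalWord.empty : NormalWord d).fstIdx ≠ some j := by
        simp [Word.fstIdx, NormalWord.empty]
      let w₂ : NormalWord d := NormalWord.cons b NormalWord.empty hempty_fstIdx hbr
      have hw₂prod : w₂.prod = of (φ := φ) j b := by
        show (NormalWord.cons b NormalWord.empty hempty_fstIdx hbr).prod = _
        rw [NormalWord.prod_cons]
        simp
      have h12 : w₁ = w₂ := NormalWord.prod_injective (by rw [hw₁prod, huprod, hw₂prod])
      have hlen1 : w₁.toList.length = u.toList.length := by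
        have := congrArg List.length hw₁map
        simpa using this
      have hlen2 : w₂.toList.length = 1 := by
        show (NormalWord.cons b NormalWord.empty hempty_fstIdx hbr).toList.length = 1
        rfl
      have hulen : u.toList.length = 2 * v'.toList.length + 1 := by
        show ((v'.toList.reverse.map (fun p => (⟨p.1, p.2⁻¹⟩ : Σ i, Gs i))) ++
            (⟨i, a⟩ : Σ i, Gs i) :: v'.toList).length = _
        rw [List.length_append, List.length_map, List.length_reverse, List.length_cons]
        omega
      have hv'len : v'.toList.length = v.toList.length + 1 := by
        rw [hv'list]; rfl
      rw [h12, hlen2] at hlen1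
      omega

theorem conj_into_base' (hφ : ∀ i, Function.Injective (φ i)) {i j : ι} (hij : i ≠ j)
    (a : Gs i) (b : Gs j) (k : PushoutI φ)
    (heq : of (φ := φ) i a = k * of j b * k⁻¹) :
    ∃ (k' : PushoutI φ) (h : H), of (φ := φ) i a = k' * base φ h * k'⁻¹ := by
  classical
  obtain ⟨d⟩ := NormalWord.transversal_nonempty φ hφ
  set w : NormalWord d := NormalWord.equiv k with hw
  have hk : k = w.prod := by
    rw [hw]
    simp [NormalWord.equiv]
  have hred : Reduced φ w.toWord := by
    intro p hp hpr
    have h1 : p.2 ≠ 1 := w.ne_one _ hp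
    have h2 : p.2 ∈ d.set p.1 := w.normalized _ _ (by exact hp)
    -- an element of both the range and the transversal is 1
    have e1 : (((d.compl p.1).equiv p.2).2 : Gs p.1) = p.2 :=
      ((d.compl p.1).equiv_snd_eq_self_iff_mem (one_mem _)).2 h2
    have e2 : (((d.compl p.1).equiv p.2).2 : Gs p.1) = 1 :=
      ((d.compl p.1).coe_equiv_snd_eq_one_iff_mem (d.one_mem _)).2 hpr
    exact h1 (by rw [← e1, e2])
  have hkprod : k = base φ w.head * ofCoprodI w.toWord.prod := hk
  set V := ofCoprodI (φ := φ) w.toWord.prod with hV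
  set a' : Gs i := (φ i w.head)⁻¹ * a * (φ i w.head) with ha'
  have heq' : of (φ := φ) i a' = V * of j b * V⁻¹ := by
    have hbase : of (φ := φ) i (φ i w.head) = base φ w.head := of_apply_eq_base φ i _
    rw [ha']
    simp only [map_mul, map_inv, hbase]
    rw [heq, hkprod]
    group
  obtain ⟨k', c, hk'⟩ := conj_into_base hφ hij w.toWord hred a' b heq'
  refine ⟨base φ w.head * k', c, ?_⟩
  have : of (φ := φ) i a = base φ w.head * of (φ := φ) i a' * (base φ w.head)⁻¹ := by
    have hbase : of (φ := φ) i (φ i w.head) = base φ w.head := of_apply_eq_base φ i _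
    rw [ha']
    simp only [map_mul, map_inv, hbase]
    group
  rw [this, hk']
  simp [mul_assoc]

end Stmt14Aux

section Fam

variable (A B : Type) [Group A] [Group B]

/-- The two-element family of groups. -/
def Stmt14Fam : Bool → Type := fun b => bif b then A else B

instance stmt14FamGroup : ∀ b, Group (Stmt14Fam A B b)
  | true => ‹Group A›
  | false => ‹Group B›

variable {A B} {C : Type} [Group C]

/-- The two maps from the base group. -/
def stmt14Hom (i : C →* A) (j : C →* B) : ∀ b, C →* Stmt14Fam A B b
  | true => i
  | false => j

end Fam

/-- Let `G = A ∗_C B` be the amalgamated free product of injective homomorphisms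
`i : C → A` and `j : C → B`; this is expressed by saying that `G`, together with
homomorphisms `iA : A → G` and `iB : B → G` satisfying `iA ∘ i = iB ∘ j`, is the pushout
of `i` and `j` in the category of groups.  If an element of the image of `A` in `G` is
conjugate in `G` to an element of the image of `B`, then it is conjugate in `G` to an
element of the image of `C`. -/
theorem stmt_14 {A B C G : Type} [Group A] [Group B] [Group C] [Group G]
    (i : C →* A) (j : C →* B) (hi : Function.Injective i) (hj : Function.Injective j)
    (iA : A →* G) (iB : B →* G) (hcomm : iA.comp i = iB.comp j)
    (huniv : ∀ (H : Type) [Group H] (f : A →* H) (g : B →* H),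
      f.comp i = g.comp j → ∃! h : G →* H, h.comp iA = f ∧ h.comp iB = g)
    (a : A) (b : B) (k : G) (hconj : iA a = k * iB b * k⁻¹) :
    ∃ (k' : G) (c : C), iA a = k' * iA (i c) * k'⁻¹ := by
  set fφ := stmt14Hom i j with hfφ
  have hφ : ∀ b, Function.Injective (fφ b) := fun b => by
    cases b
    · exact hj
    · exact hi
  set ofA : A →* PushoutI fφ := PushoutI.of (φ := fφ) true with hofA
  set ofB : B →* PushoutI fφ := PushoutI.of (φ := fφ) false with hofB
  have hcomp : ofA.comp i = ofB.comp j :=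
    (PushoutI.of_comp_eq_base (φ := fφ) true).trans
      (PushoutI.of_comp_eq_base (φ := fφ) false).symm
  obtain ⟨θ, ⟨hθA, hθB⟩, -⟩ := huniv (PushoutI fφ) ofA ofB hcomp
  -- the map back
  set fmap : ∀ b, Stmt14Fam A B b →* G :=
    (fun b => match b with | true => iA | false => iB) with hfmap
  have hf : ∀ b, (fmap b).comp (fφ b) = iA.comp i := fun b => by
    cases b
    · exact hcomm.symm
    · rfl
  set ℓ : PushoutI fφ →* G := PushoutI.lift fmap (iA.comp i) hf with hℓ
  have hθa : θ (iA a) = PushoutI.of (φ := fφ) true a := by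
    have := DFunLike.congr_fun hθA a
    exact this
  have hθb : θ (iB b) = PushoutI.of (φ := fφ) false b := by
    have := DFunLike.congr_fun hθB b
    exact this
  have hmain : PushoutI.of (φ := fφ) true a =
      θ k * PushoutI.of (φ := fφ) false b * (θ k)⁻¹ := by
    rw [← hθa, ← hθb, hconj]
    simp
  obtain ⟨k', c, hk'⟩ :=
    Stmt14Aux.conj_into_base' hφ (by simp : (true : Bool) ≠ false) a b (θ k) hmain
  refine ⟨ℓ k', c, ?_⟩
  have happ := congrArg ℓ hk'
  have hbase : ℓ (PushoutI.base fφ c) = iA (i c) := by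
    rw [← PushoutI.of_apply_eq_base fφ true c]
    exact PushoutI.lift_of fmap (iA.comp i) hf (i := true) (i c)
  have hofa : ℓ (PushoutI.of (φ := fφ) true a) = iA a :=
    PushoutI.lift_of fmap (iA.comp i) hf (i := true) a
  rw [map_mul, map_mul, map_inv, hbase, hofa] at happ
  exact happ
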